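/- For a vertex v of T, let T(v) denote the highest vertex of the decomposition D whose root is v (the largest decomposition subtree rooted at v), and let h(v) be the height of T(v). Then h(v) depends only on the depth of v: if u and v are vertices of T with d(u) = d(v), then h(u) = h(v). -/

import Mathlib

namespace VEB

inductive OTree : Type where
  | node : List OTree → OTree

def OTree.children : OTree → List OTree
  | .node cs => cs

mutual
  def height : OTree → ℕ
    | .node cs => 1 + heightList cs
  def heightList : List OTree → ℕ
    | [] => 0
    | c :: cs => max (height c) (heightList cs)
end

def subtreeAt? : OTree → List ℕ → Option OTree
  | t, [] => some t
  | t, i :: p =>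
    match t.children[i]? with
    | some c => subtreeAt? c p
    | none => none

/-- `p` is (the path of) a vertex of `t`. -/
def IsVertex (t : OTree) (p : List ℕ) : Prop := (subtreeAt? t p).isSome

/-- `p` is a leaf of `t`. -/
def IsLeaf (t : OTree) (p : List ℕ) : Prop := subtreeAt? t p = some (.node [])

/-- All leaves of `t` are at the same depth (the bottom level). -/
def Uniform (t : OTree) : Prop := ∀ p, IsLeaf t p → p.length + 1 = height t

/-- The top `m+1` levels of `t` (the truncation of height `m+1`). -/
def trunc : ℕ → OTree → OTree
  | 0, _ => .node []
  | m+1, t => .node (t.children.map (trunc m))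

/-- Paths of the vertices at depth `m`, in left-to-right order. -/
def levelPaths : ℕ → OTree → List (List ℕ)
  | 0, _ => [[]]
  | m+1, t => ((t.children.zipIdx.map Prod.swap).map fun ic => (levelPaths m ic.2).map (ic.1 :: ·)).flatten

/-- The level at which a tree of height `h` is cut: `max ⌊ε h⌋ 1`. -/
noncomputable def cutLevel (ε : ℝ) (h : ℕ) : ℕ := max ⌊ε * (h : ℝ)⌋₊ 1

/-- The van Emde Boas order of the vertex paths of `t` (with recursion fuel). -/
noncomputable def vEBAux (ε : ℝ) : ℕ → OTree → List (List ℕ)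
  | 0, _ => []
  | fuel+1, t =>
    if height t ≤ 1 then [[]]
    else
      let m := cutLevel ε (height t)
      vEBAux ε fuel (trunc (m - 1) t) ++
        ((levelPaths m t).map fun q =>
          match subtreeAt? t q with
          | some s => (vEBAux ε fuel s).map (q ++ ·)
          | none => []).flatten

/-- The van Emde Boas order `vEB_ε(t)` of the vertex paths of `t`. -/
noncomputable def vEB (ε : ℝ) (t : OTree) : List (List ℕ) := vEBAux ε (height t) t

/-- Position (index) of vertex `p` in the van Emde Boas order. -/
noncomputable def pos (ε : ℝ) (t : OTree) (p : List ℕ) : ℕ := (vEB ε t).idxOf p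

/-- `A` is a set of vertices occupying consecutive positions in `vEB_ε(t)`. -/
def MemInterval (ε : ℝ) (t : OTree) (A : Set (List ℕ)) : Prop :=
  ∃ i n, A = {p | p ∈ ((vEB ε t).drop i).take n}

/-- The vertices of the decomposition `D` of `t`: pairs `(p, k)` of the root path
and the height of a decomposition subtree (with recursion fuel). -/
noncomputable def decompAux (ε : ℝ) : ℕ → OTree → List (List ℕ × ℕ)
  | 0, _ => []
  | fuel+1, t =>
    if height t ≤ 1 then [([], 1)]
    else
      let m := cutLevel ε (height t)
      ([], height t) ::
        (decompAux ε fuel (trunc (m - 1) t) ++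
          ((levelPaths m t).map fun q =>
            match subtreeAt? t q with
            | some s => (decompAux ε fuel s).map fun r => (q ++ r.1, r.2)
            | none => []).flatten)

/-- The vertices of the decomposition `D` of `t`. -/
noncomputable def decompVerts (ε : ℝ) (t : OTree) : List (List ℕ × ℕ) :=
  decompAux ε (height t) t

/-- The children in the decomposition tree `D` of the decomposition vertex `(p, k)`:
the top tree followed by the bottom trees in left-to-right order. -/
noncomputable def dChildren (ε : ℝ) (t : OTree) (p : List ℕ) (k : ℕ) : List (List ℕ × ℕ) :=
  if k ≤ 1 then []
  else
    match subtreeAt? t p with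
    | some s =>
      (p, cutLevel ε k) ::
        (levelPaths (cutLevel ε k) s).map fun q => (p ++ q, k - cutLevel ε k)
    | none => []

/-- The decomposition subtree `(p, k)` contains the vertex `w` of `t`;
equivalently, the leaf `{w}` of `D` lies in the subtree of `D` rooted at `(p, k)`. -/
def DContains (p : List ℕ) (k : ℕ) (w : List ℕ) : Prop :=
  p <+: w ∧ w.length < p.length + k

/-- Vertex `v` is to the left of the branch with leaf `ℓ`. -/
def LeftOfBranch (v ℓ : List ℕ) : Prop := List.Lex (· < ·) v (ℓ.take v.length)

/-- Vertex `v` is to the right of the branch with leaf `ℓ`. -/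
def RightOfBranch (v ℓ : List ℕ) : Prop := List.Lex (· < ·) (ℓ.take v.length) v

/-- Every internal vertex of `t` has at least `a` children. -/
def MinArity (t : OTree) (a : ℕ) : Prop :=
  ∀ p s, subtreeAt? t p = some s → s.children ≠ [] → a ≤ s.children.length

/-- Every internal vertex of `t` has at most `b` children. -/
def MaxArity (t : OTree) (b : ℕ) : Prop :=
  ∀ p s, subtreeAt? t p = some s → s.children.length ≤ b

/-- `w` lies on the leftmost branch descending from `v` (always taking the leftmost child). -/
def OnLeftmostBranch (v w : List ℕ) : Prop :=
  v <+: w ∧ ∀ n (hn : n < w.length), v.length ≤ n → w.get ⟨n, hn⟩ = 0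

/-- `w` lies on the rightmost branch descending from `v` (always taking the rightmost child). -/
def OnRightmostBranch (t : OTree) (v w : List ℕ) : Prop :=
  v <+: w ∧ ∀ n (hn : n < w.length), v.length ≤ n →
    ∀ s, subtreeAt? t (w.take n) = some s → w.get ⟨n, hn⟩ + 1 = s.children.length


-- ===== aux lemmas =====
lemma height_pos (t : OTree) : 0 < height t := by cases t; simp [height]

lemma subtreeAt?_nil (t : OTree) : subtreeAt? t [] = some t := rfl

lemma subtreeAt?_cons (t : OTree) (i : ℕ) (p : List ℕ) :
    subtreeAt? t (i :: p) = match t.children[i]? with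
      | some c => subtreeAt? c p | none => none := by
  cases t; rfl

lemma subtreeAt?_append (t : OTree) (p q : List ℕ) :
    subtreeAt? t (p ++ q) = (subtreeAt? t p).bind (fun s => subtreeAt? s q) := by
  induction p generalizing t with
  | nil => simp [subtreeAt?_nil]
  | cons i p ih =>
    rw [List.cons_append, subtreeAt?_cons, subtreeAt?_cons]
    cases t.children[i]? with
    | none => rfl
    | some c => exact ih c

lemma exists_height_eq_heightList (cs : List OTree) (h : cs ≠ []) :
    ∃ c ∈ cs, height c = heightList cs := by
  induction cs with
  | nil => simp at h
  | cons c cs ih =>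
    rcases eq_or_ne cs [] with rfl | hne
    · exact ⟨c, by simp, by simp [heightList]⟩
    · obtain ⟨c', hc', hh⟩ := ih hne
      rcases le_total (height c) (heightList cs) with hle | hle
      · exact ⟨c', by simp [hc'], by simp [heightList, max_eq_right hle, hh]⟩
      · exact ⟨c, by simp, by simp [heightList, max_eq_left hle]⟩

lemma exists_deep_leaf (t : OTree) :
    ∃ q, subtreeAt? t q = some (.node []) ∧ q.length + 1 = height t := by
  generalize hn : height t = n
  induction n using Nat.strong_induction_on generalizing t with
  | _ n ih =>
    obtain ⟨cs⟩ := t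
    rcases eq_or_ne cs [] with rfl | hne
    · exact ⟨[], rfl, by simp only [List.length_nil]; simp [height, heightList] at hn; omega⟩
    · obtain ⟨c, hc, hh⟩ := exists_height_eq_heightList cs hne
      obtain ⟨i, hi⟩ := List.getElem?_of_mem hc
      have h1 : height (OTree.node cs) = 1 + heightList cs := by simp [height]
      have hlt : height c < n := by omega
      obtain ⟨q, hq1, hq2⟩ := ih _ hlt c rfl
      refine ⟨i :: q, ?_, ?_⟩
      · rw [subtreeAt?_cons]; simp [OTree.children, hi, hq1]
      · simp only [List.length_cons]; omega

lemma length_lt_height {t : OTree} {p : List ℕ} {s : OTree}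
    (h : subtreeAt? t p = some s) : p.length < height t := by
  induction p generalizing t with
  | nil => simpa using height_pos t
  | cons i p ih =>
    rw [subtreeAt?_cons] at h
    rcases hc : t.children[i]? with _ | c
    · simp [hc] at h
    · simp only [hc] at h
      have h1 := ih h
      obtain ⟨cs⟩ := t
      have hc' : c ∈ cs := List.mem_of_getElem? hc
      have : height c ≤ heightList cs := by
        clear hc h
        induction cs with
        | nil => simp at hc'
        | cons d ds ihd =>
          rcases List.mem_cons.1 hc' with rfl | hm
          · simp [heightList]
          · simp [heightList]; exact Or.inr (ihd hm)
      simp only [List.length_cons, height]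
      omega

lemma subtree_uniform {t : OTree} {p : List ℕ} {s : OTree}
    (ht : Uniform t) (h : subtreeAt? t p = some s) :
    Uniform s ∧ height s + p.length = height t := by
  have key : ∀ q, IsLeaf s q → p.length + q.length + 1 = height t := by
    intro q hq
    have : IsLeaf t (p ++ q) := by
      unfold IsLeaf at hq ⊢
      rw [subtreeAt?_append, h]; simpa using hq
    have h2 := ht _ this
    rw [List.length_append] at h2; omega
  obtain ⟨q0, hq0, hq0len⟩ := exists_deep_leaf s
  have h0 := key q0 hq0
  constructor
  · intro q hq
    have := key q hq
    omega
  · omega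

lemma height_trunc (m : ℕ) (t : OTree) : height (trunc m t) = min (m+1) (height t) := by
  induction m generalizing t with
  | zero =>
    have := height_pos t
    simp [trunc, height, heightList]; omega
  | succ m ih =>
    obtain ⟨cs⟩ := t
    show height (.node (cs.map (trunc m))) = _
    have hl : ∀ ds : List OTree, heightList (ds.map (trunc m)) = min (m+1) (heightList ds) := by
      intro ds
      induction ds with
      | nil => simp [heightList]
      | cons d ds ihd =>
        simp only [List.map_cons, heightList, ihd, ih d]
        exact (min_max_distrib_left ..).symm
    simp [height, hl cs]; omega

lemma subtreeAt?_trunc {p : List ℕ} {m : ℕ} (t : OTree) (h : p.length ≤ m) :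
    subtreeAt? (trunc m t) p = (subtreeAt? t p).map (trunc (m - p.length)) := by
  induction p generalizing m t with
  | nil => simp [subtreeAt?_nil]
  | cons i p ih =>
    cases m with
    | zero => simp at h
    | succ m =>
      rw [subtreeAt?_cons, subtreeAt?_cons]
      show (match (trunc (m+1) t).children[i]? with
        | some c => subtreeAt? c p | none => none) = _
      obtain ⟨cs⟩ := t
      simp only [trunc, OTree.children, List.getElem?_map]
      cases hc : cs[i]? with
      | none => simp
      | some c =>
        simp only [Option.map_some]
        rw [ih c (by simpa using h)]
        simp [Nat.succ_sub_succ]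

lemma isVertex_of_trunc {p : List ℕ} {m : ℕ} {t : OTree}
    (h : IsVertex (trunc m t) p) : IsVertex t p ∧ p.length ≤ m := by
  have hlen : p.length ≤ m := by
    have := h
    unfold IsVertex at this
    rw [Option.isSome_iff_exists] at this
    obtain ⟨s, hs⟩ := this
    have := length_lt_height hs
    rw [height_trunc] at this
    omega
  refine ⟨?_, hlen⟩
  unfold IsVertex at h ⊢
  rw [subtreeAt?_trunc t hlen] at h
  simpa using h

lemma isVertex_trunc {p : List ℕ} {m : ℕ} {t : OTree}
    (h : IsVertex t p) (hlen : p.length ≤ m) : IsVertex (trunc m t) p := by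
  unfold IsVertex at h ⊢
  rw [subtreeAt?_trunc t hlen]
  simpa using h

lemma uniform_trunc {t : OTree} (ht : Uniform t) (m : ℕ) : Uniform (trunc m t) := by
  intro p hp
  unfold IsLeaf at hp
  have hv : IsVertex (trunc m t) p := by unfold IsVertex; simp [hp]
  obtain ⟨hvt, hlen⟩ := isVertex_of_trunc hv
  rw [subtreeAt?_trunc t hlen] at hp
  rw [Option.map_eq_some_iff] at hp
  obtain ⟨s, hs, hts⟩ := hp
  rw [height_trunc]
  rcases eq_or_lt_of_le hlen with heq | hlt
  · -- p.length = m : use length_lt_height on t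
    have := length_lt_height hs
    omega
  · -- p.length < m : trunc (m - p.length) s = node [] with m - p.length > 0 → s = node []
    have hpos : 0 < m - p.length := by omega
    obtain ⟨k, hk⟩ := Nat.exists_eq_succ_of_ne_zero (Nat.pos_iff_ne_zero.1 hpos)
    rw [hk] at hts
    obtain ⟨cs⟩ := s
    simp only [trunc, OTree.node.injEq, List.map_eq_nil_iff] at hts
    subst hts
    have := ht p hs
    have := length_lt_height hs
    omega

lemma mem_levelPaths {q : List ℕ} {m : ℕ} {t : OTree} :
    q ∈ levelPaths m t ↔ IsVertex t q ∧ q.length = m := by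
  induction m generalizing q t with
  | zero =>
    simp only [levelPaths, List.mem_singleton, List.length_eq_zero_iff]
    constructor
    · rintro rfl; exact ⟨by simp [IsVertex, subtreeAt?_nil], rfl⟩
    · rintro ⟨-, rfl⟩; rfl
  | succ m ih =>
    simp only [levelPaths, List.map_map, List.mem_flatten, List.mem_map]
    constructor
    · rintro ⟨l, ⟨⟨c, i⟩, hic, rfl⟩, hq⟩
      rw [List.mk_mem_zipIdx_iff_getElem?] at hic
      simp only [Function.comp_apply, Prod.swap, List.mem_map] at hq
      obtain ⟨q', hq', rfl⟩ := hq
      obtain ⟨hv, hlen⟩ := ih.1 hq'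
      refine ⟨?_, by simp [hlen]⟩
      unfold IsVertex at hv ⊢
      rw [subtreeAt?_cons]; simpa [hic] using hv
    · rintro ⟨hv, hlen⟩
      cases q with
      | nil => simp at hlen
      | cons i q' =>
        unfold IsVertex at hv
        rw [subtreeAt?_cons] at hv
        cases hc : t.children[i]? with
        | none => simp [hc] at hv
        | some c =>
          simp only [hc] at hv
          refine ⟨(levelPaths m c).map (i :: ·), ⟨⟨c, i⟩,
            List.mk_mem_zipIdx_iff_getElem?.2 hc, rfl⟩, ?_⟩
          simp only [List.mem_map]
          exact ⟨q', ih.2 ⟨hv, by simpa using hlen⟩, rfl⟩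

lemma cutLevel_lt {ε : ℝ} (hε1 : ε ≤ 1/2) {h : ℕ} (hh : 2 ≤ h) : cutLevel ε h < h := by
  unfold cutLevel
  have hfl : ⌊ε * (h : ℝ)⌋₊ < h := by
    rw [Nat.floor_lt' (by omega)]
    have h0 : (2:ℝ) ≤ (h : ℝ) := by exact_mod_cast hh
    nlinarith
  exact max_lt hfl (by omega)

lemma height_eq_one_iff {t : OTree} : height t ≤ 1 ↔ t = .node [] := by
  constructor
  · intro h
    obtain ⟨cs⟩ := t
    cases cs with
    | nil => rfl
    | cons c cs =>
      exfalso
      have h1 : height (OTree.node (c :: cs)) = 1 + heightList (c :: cs) := by simp [height]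
      have h2 : heightList (c :: cs) = max (height c) (heightList cs) := by simp [heightList]
      have := height_pos c
      omega
  · rintro rfl; simp [height, heightList]

lemma vertex_of_small {t : OTree} {p : List ℕ} (ht : height t ≤ 1)
    (hp : IsVertex t p) : p = [] := by
  rw [height_eq_one_iff] at ht; subst ht
  cases p with
  | nil => rfl
  | cons i p =>
    unfold IsVertex at hp
    rw [subtreeAt?_cons] at hp
    simp [OTree.children] at hp

lemma mem_decompAux_isVertex {ε : ℝ} {fuel : ℕ} {t : OTree} {p : List ℕ} {k : ℕ}
    (h : (p, k) ∈ decompAux ε fuel t) : IsVertex t p := by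
  induction fuel generalizing t p k with
  | zero => simp [decompAux] at h
  | succ fuel ih =>
    rw [decompAux] at h
    split at h
    · simp at h
      exact h.1 ▸ (by simp [IsVertex, subtreeAt?_nil])
    · simp only [List.mem_cons, List.mem_append, Prod.mk.injEq, List.mem_flatten,
        List.mem_map] at h
      rcases h with ⟨rfl, rfl⟩ | h | ⟨l, ⟨q, hq, rfl⟩, hm⟩
      · simp [IsVertex, subtreeAt?_nil]
      · have := ih h
        exact (isVertex_of_trunc this).1
      · obtain ⟨hqv, hqlen⟩ := mem_levelPaths.1 hq
        cases hs : subtreeAt? t q with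
        | none => simp [hs] at hm
        | some s =>
          rw [hs] at hm
          simp only [List.mem_map] at hm
          obtain ⟨r, hr, hpk⟩ := hm
          injection hpk with h1 h2
          subst h1; subst h2
          have hrv := ih (show (r.1, r.2) ∈ decompAux ε fuel s from hr)
          unfold IsVertex at hrv ⊢
          rw [subtreeAt?_append, hs]
          simpa using hrv

lemma decomp_transfer {ε : ℝ} (hε1 : ε ≤ 1/2) :
    ∀ fuel (t t' : OTree) (u v : List ℕ) (k : ℕ),
      Uniform t → Uniform t' → height t = height t' →
      IsVertex t u → IsVertex t' v → u.length = v.length →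
      (u, k) ∈ decompAux ε fuel t → (v, k) ∈ decompAux ε fuel t' := by
  intro fuel
  induction fuel with
  | zero => intro t t' u v k _ _ _ _ _ _ h; simp [decompAux] at h
  | succ fuel ih =>
    intro t t' u v k ht ht' hh hu hv hlen hmem
    rw [decompAux] at hmem ⊢
    by_cases hle : height t ≤ 1
    · rw [if_pos hle] at hmem
      rw [if_pos (hh ▸ hle)]
      have hu0 := vertex_of_small hle hu
      have hv0 := vertex_of_small (hh ▸ hle) hv
      subst hu0; subst hv0
      simpa using hmem
    · rw [if_neg hle] at hmem
      rw [if_neg (hh ▸ hle : ¬ height t' ≤ 1)]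
      have h2 : 2 ≤ height t := by have := height_pos t; omega
      set m := cutLevel ε (height t) with hm
      have hm' : cutLevel ε (height t') = m := by rw [← hh]
      have hm1 : 1 ≤ m := le_max_right _ _
      have hmlt : m < height t := cutLevel_lt hε1 h2
      show (v, k) ∈ ([], height t') :: (decompAux ε fuel (trunc (cutLevel ε (height t') - 1) t') ++
          ((levelPaths (cutLevel ε (height t')) t').map fun q =>
            match subtreeAt? t' q with
            | some s => (decompAux ε fuel s).map fun r => (q ++ r.1, r.2)
            | none => []).flatten)
      rw [hm']
      simp only [List.mem_cons, List.mem_append, Prod.mk.injEq, List.mem_flatten,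
        List.mem_map] at hmem
      rcases hmem with ⟨rfl, rfl⟩ | hmem | ⟨l, ⟨q, hq, rfl⟩, hin⟩
      · -- root case
        have hv0 : v = [] := by
          rw [List.length_eq_zero_iff.symm, ← hlen]; rfl
        subst hv0
        exact hh ▸ List.mem_cons_self
      · -- top tree case
        have huv : IsVertex (trunc (m-1) t) u := mem_decompAux_isVertex hmem
        have hulen : u.length ≤ m - 1 := by
          obtain ⟨s, hs⟩ := Option.isSome_iff_exists.1 huv
          have := length_lt_height hs
          rw [height_trunc] at this
          omega
        have hvtr : IsVertex (trunc (m-1) t') v := isVertex_trunc hv (hlen ▸ hulen)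
        have hmem2 := ih (trunc (m-1) t) (trunc (m-1) t') u v k
          (uniform_trunc ht _) (uniform_trunc ht' _)
          (by rw [height_trunc, height_trunc, hh])
          huv hvtr hlen hmem
        exact List.mem_cons_of_mem _ (List.mem_append_left _ hmem2)
      · -- bottom trees case
        obtain ⟨hqv, hqlen⟩ := mem_levelPaths.1 hq
        cases hs : subtreeAt? t q with
        | none => simp [hs] at hin
        | some s =>
          rw [hs] at hin
          simp only [List.mem_map] at hin
          obtain ⟨r, hr, hpk⟩ := hin
          injection hpk with h1 h2
          subst h1; subst h2
          have hulen : m ≤ (q ++ r.1).length := by simp [hqlen]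
          have hvq : IsVertex t' (v.take m) := by
            unfold IsVertex at hv ⊢
            rw [← List.take_append_drop m v, subtreeAt?_append] at hv
            cases h' : subtreeAt? t' (v.take m) with
            | none => rw [h'] at hv; simp at hv
            | some s' => simp
          obtain ⟨s', hs'⟩ := Option.isSome_iff_exists.1 hvq
          have hvqlen : (v.take m).length = m := by
            rw [List.length_take]
            omega
          have hq' : v.take m ∈ levelPaths m t' := mem_levelPaths.2 ⟨hvq, hvqlen⟩
          have hrv : IsVertex s' (v.drop m) := by
            unfold IsVertex at hv ⊢
            rw [← List.take_append_drop m v, subtreeAt?_append, hs'] at hv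
            simpa using hv
          have hr1v : IsVertex s r.1 := mem_decompAux_isVertex
            (show (r.1, r.2) ∈ decompAux ε fuel s from hr)
          obtain ⟨hsu, hsh⟩ := subtree_uniform ht hs
          obtain ⟨hsu', hsh'⟩ := subtree_uniform ht' hs'
          have hsheq : height s = height s' := by
            rw [hqlen] at hsh
            rw [hvqlen] at hsh'
            omega
          have hrlen : r.1.length = (v.drop m).length := by
            rw [List.length_drop]
            have hlq : (q ++ r.1).length = q.length + r.1.length := by simp
            omega
          have hmem' := ih s s' r.1 (v.drop m) r.2 hsu hsu' hsheq hr1v hrv hrlen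
            (show (r.1, r.2) ∈ decompAux ε fuel s from hr)
          refine List.mem_cons_of_mem _ (List.mem_append_right _ ?_)
          rw [List.mem_flatten]
          refine ⟨_, List.mem_map_of_mem hq', ?_⟩
          rw [hs']
          rw [List.mem_map]
          refine ⟨(v.drop m, r.2), hmem', ?_⟩
          rw [Prod.mk.injEq]
          exact ⟨List.take_append_drop m v, rfl⟩

/-- For a vertex `v` of `T`, let `T(v)` be the largest decomposition
subtree rooted at `v` and `h(v)` its height. Then `h(v)` depends only on the depth of
`v`: if `d(u) = d(v)` then `h(u) = h(v)`. -/
theorem largest_decomp_height_depends_only_on_depth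
    (ε : ℝ) (hε0 : 0 < ε) (hε1 : ε ≤ 1/2) (t : OTree) (ht : Uniform t)
    (u v : List ℕ) (hu : IsVertex t u) (hv : IsVertex t v)
    (hlen : u.length = v.length)
    (ku kv : ℕ)
    (hku : (u, ku) ∈ decompVerts ε t) (hkumax : ∀ k, (u, k) ∈ decompVerts ε t → k ≤ ku)
    (hkv : (v, kv) ∈ decompVerts ε t) (hkvmax : ∀ k, (v, k) ∈ decompVerts ε t → k ≤ kv) :
    ku = kv := by
  have h1 := decomp_transfer hε1 (height t) t t u v ku ht ht rfl hu hv hlen hku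
  have h2 := decomp_transfer hε1 (height t) t t v u kv ht ht rfl hv hu hlen.symm hkv
  exact le_antisymm (hkvmax _ h1) (hkumax _ h2)

end VEB
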